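/- Let U be the γ-unitization of a GPEA P and let ∼ be a congruence on P. Define ∼* on U by: for a, b ∈ P, a ∼* b iff a ∼ b, ηa ∼* ηb iff a ∼ b, and no element of P is ∼*-related to any element of U \ P. Then ∼* is a congruence on U iff ∼ is a γ-congruence (a ∼ b ⇔ γa ∼ γb) satisfying (C4) and (C5'). -/
import Mathlib


open scoped Classical

/-- A generalized pseudo effect algebra: partial orthosummation modeled via `Option`. -/
structure GPEA (P : Type*) where
  oplus : P → P → Option P
  zero : P
  assoc₁ : ∀ {a b c ab s : P}, oplus a b = some ab → oplus ab c = some s →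
    ∃ bc, oplus b c = some bc ∧ oplus a bc = some s
  assoc₂ : ∀ {a b c bc s : P}, oplus b c = some bc → oplus a bc = some s →
    ∃ ab, oplus a b = some ab ∧ oplus ab c = some s
  conj : ∀ {a b s : P}, oplus a b = some s →
    (∃ c, oplus c a = some s) ∧ (∃ d, oplus b d = some s)
  cancel_right : ∀ {a b c s : P}, oplus a c = some s → oplus b c = some s → a = b
  cancel_left : ∀ {a b c s : P}, oplus c a = some s → oplus c b = some s → a = b
  oplus_zero : ∀ a : P, oplus a zero = some a
  zero_oplus : ∀ a : P, oplus zero a = some a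
  pos : ∀ {a b : P}, oplus a b = some zero → a = zero ∧ b = zero

namespace GPEA

variable {P Q : Type*}

/-- `a ≤ b` iff there is `c` with `a ⊕ c = b`. -/
def le (G : GPEA P) (a b : P) : Prop := ∃ c, G.oplus a c = some b

/-- `a ≤ b` (left version) iff there is `d` with `d ⊕ a = b`. -/
def leL (G : GPEA P) (a b : P) : Prop := ∃ d, G.oplus d a = some b

/-- An ideal: a nonempty, downward closed subset closed under existing orthosums. -/
def IsIdeal (G : GPEA P) (I : Set P) : Prop :=
  I.Nonempty ∧ (∀ a ∈ I, ∀ b : P, G.le b a → b ∈ I) ∧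
    (∀ a ∈ I, ∀ b ∈ I, ∀ s : P, G.oplus a b = some s → s ∈ I)

/-- A normal ideal: `a ⊕ c = c ⊕ b` implies `a ∈ I ↔ b ∈ I`. -/
def IsNormalIdeal (G : GPEA P) (I : Set P) : Prop :=
  G.IsIdeal I ∧ ∀ a b c s : P, G.oplus a c = some s → G.oplus c b = some s → (a ∈ I ↔ b ∈ I)

/-- Condition (R1) for an ideal. -/
def R1 (G : GPEA P) (I : Set P) : Prop :=
  ∀ i ∈ I, ∀ a b s : P, G.oplus a b = some s → G.le i s →
    ∃ j ∈ I, ∃ k ∈ I, G.le j a ∧ G.le k b ∧ ∃ t, G.oplus j k = some t ∧ G.le i t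

/-- Condition (R2) for an ideal. -/
def R2 (G : GPEA P) (I : Set P) : Prop :=
  ∀ i ∈ I, ∀ a : P, G.le i a →
    (∀ b x s : P, G.oplus x i = some a → G.oplus x b = some s →
      ∃ j ∈ I, G.le j b ∧ ∀ c, G.oplus j c = some b → ∃ t, G.oplus a c = some t) ∧
    (∀ b y s : P, G.oplus i y = some a → G.oplus b y = some s →
      ∃ k ∈ I, G.le k b ∧ ∀ z, G.oplus z k = some b → ∃ t, G.oplus z a = some t)

/-- A Riesz ideal is an ideal satisfying (R1) and (R2). -/
def IsRieszIdeal (G : GPEA P) (I : Set P) : Prop := G.IsIdeal I ∧ G.R1 I ∧ G.R2 I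

/-- A normal Riesz ideal. -/
def IsNormalRieszIdeal (G : GPEA P) (I : Set P) : Prop := G.IsNormalIdeal I ∧ G.R1 I ∧ G.R2 I

/-- A GPEA-morphism. -/
def IsMorphism (G : GPEA P) (H : GPEA Q) (φ : P → Q) : Prop :=
  ∀ a b s : P, G.oplus a b = some s → H.oplus (φ a) (φ b) = some (φ s)

/-- A unitizing GPEA-automorphism: a GPEA-automorphism `γ` such that
`γa ⊕ b` is defined iff `b ⊕ a` is defined. -/
def IsUnitizing (G : GPEA P) (γ : P → P) : Prop :=
  Function.Bijective γ ∧ G.IsMorphism G γ ∧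
    (∀ a b : P, (∃ s, G.oplus (γ a) (γ b) = some s) → ∃ t, G.oplus a b = some t) ∧
    (∀ a b : P, (∃ s, G.oplus (γ a) b = some s) ↔ ∃ t, G.oplus b a = some t)

/-- A weak congruence. -/
def IsWeakCong (G : GPEA P) (r : P → P → Prop) : Prop :=
  Equivalence r ∧ ∀ a b a₁ b₁ s s₁ : P, G.oplus a b = some s → G.oplus a₁ b₁ = some s₁ →
    r a a₁ → r b b₁ → r s s₁

/-- Condition (C3): a weak congruence satisfying it is a congruence. -/
def C3 (G : GPEA P) (r : P → P → Prop) : Prop :=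
  ∀ a b s : P, G.oplus a b = some s →
    (∀ a₁, r a a₁ → ∃ b₁, r b b₁ ∧ ∃ t, G.oplus a₁ b₁ = some t) ∧
    (∀ b₂, r b b₂ → ∃ a₂, r a a₂ ∧ ∃ t, G.oplus a₂ b₂ = some t)

/-- Condition (C4). -/
def C4 (G : GPEA P) (r : P → P → Prop) : Prop :=
  ∀ a b a₁ b₁ s t : P, r a b →
    ((G.oplus a a₁ = some s ∧ G.oplus b b₁ = some t ∧ r s t) ∨
      (G.oplus a₁ a = some s ∧ G.oplus b₁ b = some t ∧ r s t)) → r a₁ b₁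

/-- Condition (C5'). -/
def C5' (G : GPEA P) (r : P → P → Prop) : Prop :=
  ∀ a b c s : P, G.oplus b c = some s → r a s →
    ∃ a₁ a₂, r a₁ b ∧ r a₂ c ∧ G.oplus a₁ a₂ = some a

/-- Condition (CR): here `a \ c` is the unique `x` with `x ⊕ c = a`. -/
def CR (G : GPEA P) (r : P → P → Prop) : Prop :=
  ∀ a b : P, r a b → ∃ c d : P,
    G.le c a ∧ G.le a d ∧ G.le c b ∧ G.le b d ∧
    (∀ x, G.oplus x c = some a → r x G.zero) ∧
    (∀ x, G.oplus x c = some b → r x G.zero) ∧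
    (∀ x, G.oplus x a = some d → r x G.zero) ∧
    (∀ x, G.oplus x b = some d → r x G.zero)

/-- A Riesz congruence: a congruence satisfying (C4), (C5') and (CR). -/
def IsRieszCong (G : GPEA P) (r : P → P → Prop) : Prop :=
  G.IsWeakCong r ∧ G.C3 r ∧ G.C4 r ∧ G.C5' r ∧ G.CR r

/-- The relation `∼_I` induced by an ideal `I`: `a ∼_I b` iff there are
`i, j ∈ I` with `i ≤ a`, `j ≤ b` and `a \ i = b \ j`. -/
def simI (G : GPEA P) (I : Set P) (a b : P) : Prop :=
  ∃ i ∈ I, ∃ j ∈ I, ∃ d : P, G.oplus d i = some a ∧ G.oplus d j = some b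

/-- Condition (GCR) for the relation `∼_I`. -/
def GCR (G : GPEA P) (I : Set P) : Prop :=
  ∀ a b : P, G.simI I a b → ∃ i ∈ I, ∃ j ∈ I, ∃ s, G.oplus i a = some s ∧ G.oplus j b = some s

/-- The Riesz decomposition property. -/
def RDP (G : GPEA P) : Prop :=
  ∀ a b c d s : P, G.oplus a b = some s → G.oplus c d = some s →
    ∃ e₁₁ e₁₂ e₂₁ e₂₂ : P, G.oplus e₁₁ e₁₂ = some a ∧ G.oplus e₂₁ e₂₂ = some b ∧
      G.oplus e₁₁ e₂₁ = some c ∧ G.oplus e₁₂ e₂₂ = some d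

end GPEA

/-- A pseudo effect algebra: a GPEA with a largest element `1`. -/
structure PEA (P : Type*) extends GPEA P where
  one : P
  le_one : ∀ a : P, ∃ c, oplus a c = some one
  le_one' : ∀ a : P, ∃ d, oplus d a = some one

namespace PEA

variable {P : Type*}

/-- The right supplement `a˜`: the unique element with `a ⊕ a˜ = 1`. -/
noncomputable def rsup (U : PEA P) (a : P) : P := Classical.choose (U.le_one a)

/-- The left supplement `a⁻`: the unique element with `a⁻ ⊕ a = 1`. -/
noncomputable def lsup (U : PEA P) (a : P) : P := Classical.choose (U.le_one' a)

/-- A state on a PEA. -/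
def IsState (U : PEA P) (s : P → ℝ) : Prop :=
  (∀ a : P, 0 ≤ s a ∧ s a ≤ 1) ∧ s U.one = 1 ∧
    ∀ a b c : P, U.oplus a b = some c → s c = s a + s b

end PEA

/-- `U` is a binary unitization of the GPEA `G` via the embedding `ι`. -/
def IsBinaryUnitization {P Q : Type*} (G : GPEA P) (U : PEA Q) (ι : P → Q) : Prop :=
  Function.Injective ι ∧ ι G.zero = U.toGPEA.zero ∧
    (∀ a b : P, U.oplus (ι a) (ι b) = (G.oplus a b).map ι) ∧
    (∀ a : P, U.one ≠ ι a) ∧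
    (∀ x y : Q, x ∉ Set.range ι → y ∉ Set.range ι → U.oplus x y = none)

/-- The orthosummation of the `γ`-unitization on `P ⊕ P`
(`Sum.inl a` is `a ∈ P`, `Sum.inr b` is `ηb`). -/
noncomputable def uop {P : Type*} (G : GPEA P) (γ : P → P) :
    P ⊕ P → P ⊕ P → Option (P ⊕ P)
  | .inl a, .inl b => (G.oplus a b).map .inl
  | .inl a, .inr b => if h : G.leL a b then some (.inr (Classical.choose h)) else none
  | .inr a, .inl b => if h : G.le (γ b) a then some (.inr (Classical.choose h)) else none
  | .inr _, .inr _ => none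

/-- A PEA-isomorphism. -/
def IsPEAIso {A B : Type*} (U : PEA A) (V : PEA B) (φ : A → B) : Prop :=
  Function.Bijective φ ∧
    (∀ a b s : A, U.oplus a b = some s → V.oplus (φ a) (φ b) = some (φ s)) ∧
    (∀ a b : A, (∃ s, V.oplus (φ a) (φ b) = some s) → ∃ t, U.oplus a b = some t) ∧
    φ U.one = V.one

/-- The coordinatewise orthosummation on `I → P`. -/
noncomputable def piOplus {P : Type*} {I : Type*} (G : GPEA P) (f g : I → P) :
    Option (I → P) :=
  if h : ∀ i, ∃ s, G.oplus (f i) (g i) = some s then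
    some (fun i => Classical.choose (h i)) else none

/-- The extension `∼*` of a relation on `P` to `P ⊕ P`. -/
def rstar {P : Type*} (r : P → P → Prop) : P ⊕ P → P ⊕ P → Prop
  | .inl a, .inl b => r a b
  | .inr a, .inr b => r a b
  | _, _ => False

section Helpers
variable {P : Type*} (G : GPEA P) (γ : P → P)

lemma uop_ll (a b : P) : uop G γ (.inl a) (.inl b) = (G.oplus a b).map .inl := rfl

lemma uop_rr (a b : P) : uop G γ (.inr a) (.inr b) = none := rfl

lemma uop_ll_inv {a b : P} {s : P ⊕ P} (h : uop G γ (.inl a) (.inl b) = some s) :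
    ∃ t, s = .inl t ∧ G.oplus a b = some t := by
  simp only [uop] at h
  cases hab : G.oplus a b with
  | none => rw [hab] at h; cases h
  | some t => rw [hab] at h; exact ⟨t, (Option.some.inj h).symm, rfl⟩

lemma uop_lr_eq {a b d : P} (h : G.oplus d a = some b) :
    uop G γ (.inl a) (.inr b) = some (.inr d) := by
  have hle : G.leL a b := ⟨d, h⟩
  simp only [uop, dif_pos hle]
  exact congrArg (fun x => some (Sum.inr x)) (G.cancel_right (Classical.choose_spec hle) h)

lemma uop_lr_inv {a b : P} {s : P ⊕ P} (h : uop G γ (.inl a) (.inr b) = some s) :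
    ∃ d, s = .inr d ∧ G.oplus d a = some b := by
  by_cases hle : G.leL a b
  · simp only [uop, dif_pos hle] at h
    exact ⟨Classical.choose hle, (Option.some.inj h).symm, Classical.choose_spec hle⟩
  · simp only [uop, dif_neg hle] at h
    cases h

lemma uop_rl_eq {a b c : P} (h : G.oplus (γ b) c = some a) :
    uop G γ (.inr a) (.inl b) = some (.inr c) := by
  have hle : G.le (γ b) a := ⟨c, h⟩
  simp only [uop, dif_pos hle]
  exact congrArg (fun x => some (Sum.inr x)) (G.cancel_left (Classical.choose_spec hle) h)

lemma uop_rl_inv {a b : P} {s : P ⊕ P} (h : uop G γ (.inr a) (.inl b) = some s) :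
    ∃ c, s = .inr c ∧ G.oplus (γ b) c = some a := by
  by_cases hle : G.le (γ b) a
  · simp only [uop, dif_pos hle] at h
    exact ⟨Classical.choose hle, (Option.some.inj h).symm, Classical.choose_spec hle⟩
  · simp only [uop, dif_neg hle] at h
    cases h

lemma gamma_zero (hγ : G.IsUnitizing γ) : γ G.zero = G.zero := by
  have h1 := hγ.2.1 _ _ _ (G.oplus_zero G.zero)
  exact G.cancel_left h1 (G.oplus_zero (γ G.zero))

end Helpers

theorem stmt15 {P : Type*} (G : GPEA P) (γ : P → P) (hγ : G.IsUnitizing γ)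
    (U : PEA (P ⊕ P)) (hop : U.toGPEA.oplus = uop G γ)
    (hz : U.toGPEA.zero = Sum.inl G.zero) (ho : U.one = Sum.inr G.zero)
    (r : P → P → Prop) (hw : G.IsWeakCong r) (h3 : G.C3 r) :
    (U.toGPEA.IsWeakCong (rstar r) ∧ U.toGPEA.C3 (rstar r)) ↔
      ((∀ a b : P, r a b ↔ r (γ a) (γ b)) ∧ G.C4 r ∧ G.C5' r) := by
  have hrefl : ∀ a : P, r a a := fun a => hw.1.refl a
  have hsymm : ∀ {a b : P}, r a b → r b a := fun h => hw.1.symm h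
  have htrans : ∀ {a b c : P}, r a b → r b c → r a c := fun h h' => hw.1.trans h h'
  have hsurj := hγ.1.2
  have hinj := hγ.1.1
  constructor
  · rintro ⟨hwU, h3U⟩
    have hγ0 := gamma_zero G γ hγ
    have one_sum : ∀ a : P, U.toGPEA.oplus (.inr (γ a)) (.inl a) = some (.inr G.zero) := by
      intro a; rw [hop]; exact uop_rl_eq G γ (G.oplus_zero (γ a))
    have hA : ∀ f : P, r (γ f) G.zero → r f G.zero := by
      intro f hf
      obtain ⟨B₁, hB₁, t, ht⟩ := (h3U _ _ _ (one_sum f)).1 (.inr G.zero) hf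
      cases B₁ with
      | inr g => exact hB₁.elim
      | inl g =>
        rw [hop] at ht
        obtain ⟨c, rfl, hc⟩ := uop_rl_inv G γ ht
        have hg : g = G.zero := hinj (((G.pos hc).1).trans hγ0.symm)
        rw [hg] at hB₁
        exact hB₁
    have hfwd : ∀ a b : P, r a b → r (γ a) (γ b) := by
      intro a b hab
      obtain ⟨A₂, hA₂, t, ht⟩ := (h3U _ _ _ (one_sum a)).2 (.inl b) hab
      cases A₂ with
      | inl c => exact hA₂.elim
      | inr c =>
        rw [hop] at ht
        obtain ⟨e, rfl, he⟩ := uop_rl_inv G γ ht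
        have hw1 : U.toGPEA.oplus (.inr c) (.inl b) = some (.inr e) := by
          rw [hop]; exact uop_rl_eq G γ he
        have he0 : r e G.zero := hwU.2 _ _ _ _ _ _ hw1 (one_sum a) (hsymm hA₂) (hsymm hab)
        have hcb : r c (γ b) := hw.2 _ _ _ _ _ _ he (G.oplus_zero (γ b)) (hrefl _) he0
        exact htrans hA₂ hcb
    have hrev : ∀ a b : P, r (γ a) (γ b) → r a b := by
      intro a b hab
      obtain ⟨B₁, hB₁, t, ht⟩ := (h3U _ _ _ (one_sum b)).1 (.inr (γ a)) (hsymm hab)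
      cases B₁ with
      | inr b' => exact hB₁.elim
      | inl b' =>
        rw [hop] at ht
        obtain ⟨e, rfl, he⟩ := uop_rl_inv G γ ht
        have hw1 : U.toGPEA.oplus (.inr (γ a)) (.inl b') = some (.inr e) := by
          rw [hop]; exact uop_rl_eq G γ he
        have he0 : r e G.zero := hwU.2 _ _ _ _ _ _ hw1 (one_sum b) hab (hsymm hB₁)
        obtain ⟨f, hfe⟩ := hsurj e
        have hf0 : r f G.zero := hA f (by rw [hfe]; exact he0)
        have S2 : U.toGPEA.oplus (.inr e) (.inl f) = some (.inr G.zero) := by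
          rw [hop]
          exact uop_rl_eq G γ (by rw [hfe]; exact G.oplus_zero e)
        obtain ⟨bc, hbc1, hbc2⟩ := U.toGPEA.assoc₁ hw1 S2
        rw [hop] at hbc1 hbc2
        obtain ⟨t, rfl, hbf⟩ := uop_ll_inv G γ hbc1
        obtain ⟨c, hceq, hct⟩ := uop_rl_inv G γ hbc2
        have hc0 : c = G.zero := (Sum.inr.inj hceq).symm
        rw [hc0] at hct
        have hta : t = a := hinj (Option.some.inj ((G.oplus_zero (γ t)).symm.trans hct))
        rw [hta] at hbf
        exact hw.2 _ _ _ _ _ _ hbf (G.oplus_zero b) (hsymm hB₁) hf0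
    have hC4 : G.C4 r := by
      intro a b a₁ b₁ s t hab hd
      rcases hd with ⟨h1, h2, hst⟩ | ⟨h1, h2, hst⟩
      · obtain ⟨x, hx⟩ := hsurj a
        obtain ⟨y, hy⟩ := hsurj b
        have L1 : U.toGPEA.oplus (.inr s) (.inl x) = some (.inr a₁) := by
          rw [hop]; exact uop_rl_eq G γ (by rw [hx]; exact h1)
        have L2 : U.toGPEA.oplus (.inr t) (.inl y) = some (.inr b₁) := by
          rw [hop]; exact uop_rl_eq G γ (by rw [hy]; exact h2)
        have hxy : r x y := hrev x y (by rw [hx, hy]; exact hab)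
        exact hwU.2 _ _ _ _ _ _ L1 L2 hst hxy
      · have L1 : U.toGPEA.oplus (.inl a) (.inr s) = some (.inr a₁) := by
          rw [hop]; exact uop_lr_eq G γ h1
        have L2 : U.toGPEA.oplus (.inl b) (.inr t) = some (.inr b₁) := by
          rw [hop]; exact uop_lr_eq G γ h2
        exact hwU.2 _ _ _ _ _ _ L1 L2 hab hst
    have hC5 : G.C5' r := by
      intro a b c s hbc has
      obtain ⟨x, hx⟩ := hsurj b
      have S : U.toGPEA.oplus (.inr s) (.inl x) = some (.inr c) := by
        rw [hop]; exact uop_rl_eq G γ (by rw [hx]; exact hbc)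
      obtain ⟨B₁, hB₁, t, ht⟩ := (h3U _ _ _ S).1 (.inr a) (hsymm has)
      cases B₁ with
      | inr x' => exact hB₁.elim
      | inl x' =>
        rw [hop] at ht
        obtain ⟨a₂, rfl, ha₂⟩ := uop_rl_inv G γ ht
        have hw1 : U.toGPEA.oplus (.inr a) (.inl x') = some (.inr a₂) := by
          rw [hop]; exact uop_rl_eq G γ ha₂
        have h2c : r a₂ c := hwU.2 _ _ _ _ _ _ hw1 S has (hsymm hB₁)
        refine ⟨γ x', a₂, ?_, h2c, ha₂⟩
        have hxx : r (γ x') (γ x) := hfwd x' x (hsymm hB₁)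
        rw [hx] at hxx
        exact hxx
    exact ⟨fun a b => ⟨hfwd a b, hrev a b⟩, hC4, hC5⟩
  · rintro ⟨hgc, h4, h5⟩
    refine ⟨⟨⟨?_, ?_, ?_⟩, ?_⟩, ?_⟩
    · -- refl
      intro x; cases x <;> exact hrefl _
    · -- symm
      intro x y h
      cases x <;> cases y <;> first | exact h.elim | exact hsymm h
    · -- trans
      intro x y z h h'
      cases x <;> cases y <;> cases z <;>
        first | exact h.elim | exact h'.elim | exact htrans h h'
    · -- additivity
      intro A B A₁ B₁ S S₁ hS hS₁ hAA hBB
      rw [hop] at hS hS₁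
      cases A with
      | inl a =>
        cases A₁ with
        | inr a₁ => exact hAA.elim
        | inl a₁ =>
          cases B with
          | inl b =>
            cases B₁ with
            | inr b₁ => exact hBB.elim
            | inl b₁ =>
              obtain ⟨s, rfl, hs⟩ := uop_ll_inv G γ hS
              obtain ⟨s₁, rfl, hs₁⟩ := uop_ll_inv G γ hS₁
              exact hw.2 _ _ _ _ _ _ hs hs₁ hAA hBB
          | inr b =>
            cases B₁ with
            | inl b₁ => exact hBB.elim
            | inr b₁ =>
              obtain ⟨d, rfl, hd⟩ := uop_lr_inv G γ hS
              obtain ⟨d₁, rfl, hd₁⟩ := uop_lr_inv G γ hS₁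
              exact h4 a a₁ d d₁ b b₁ hAA (Or.inr ⟨hd, hd₁, hBB⟩)
      | inr a =>
        cases A₁ with
        | inl a₁ => exact hAA.elim
        | inr a₁ =>
          cases B with
          | inr b => cases hS
          | inl b =>
            cases B₁ with
            | inr b₁ => exact hBB.elim
            | inl b₁ =>
              obtain ⟨c, rfl, hc⟩ := uop_rl_inv G γ hS
              obtain ⟨c₁, rfl, hc₁⟩ := uop_rl_inv G γ hS₁
              exact h4 (γ b) (γ b₁) c c₁ a a₁ ((hgc b b₁).mp hBB)
                (Or.inl ⟨hc, hc₁, hAA⟩)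
    · -- C3 on U
      intro A B S hS
      rw [hop] at hS
      cases A with
      | inl a =>
        cases B with
        | inl b =>
          obtain ⟨s, rfl, hs⟩ := uop_ll_inv G γ hS
          constructor
          · intro A₁ hA₁
            cases A₁ with
            | inr a₁ => exact hA₁.elim
            | inl a₁ =>
              obtain ⟨b₁, hb₁, t, ht⟩ := (h3 a b s hs).1 a₁ hA₁
              exact ⟨.inl b₁, hb₁, .inl t, by rw [hop]; simp [uop, ht]⟩
          · intro B₂ hB₂
            cases B₂ with
            | inr b₂ => exact hB₂.elim
            | inl b₂ =>
              obtain ⟨a₂, ha₂, t, ht⟩ := (h3 a b s hs).2 b₂ hB₂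
              exact ⟨.inl a₂, ha₂, .inl t, by rw [hop]; simp [uop, ht]⟩
        | inr b =>
          obtain ⟨d, rfl, hd⟩ := uop_lr_inv G γ hS
          constructor
          · intro A₁ hA₁
            cases A₁ with
            | inr a₁ => exact hA₁.elim
            | inl a₁ =>
              obtain ⟨d₁, hd₁, b₁, hb₁⟩ := (h3 d a b hd).2 a₁ hA₁
              refine ⟨.inr b₁, hw.2 _ _ _ _ _ _ hd hb₁ hd₁ hA₁, .inr d₁, ?_⟩
              rw [hop]; exact uop_lr_eq G γ hb₁
          · intro B₂ hB₂
            cases B₂ with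
            | inl b₂ => exact hB₂.elim
            | inr b₂ =>
              obtain ⟨x, y, hx, hy, hxy⟩ := h5 b₂ d a b hd (hsymm hB₂)
              refine ⟨.inl y, hsymm hy, .inr x, ?_⟩
              rw [hop]; exact uop_lr_eq G γ hxy
      | inr a =>
        cases B with
        | inr b => cases hS
        | inl b =>
          obtain ⟨c, rfl, hc⟩ := uop_rl_inv G γ hS
          constructor
          · intro A₁ hA₁
            cases A₁ with
            | inl a₁ => exact hA₁.elim
            | inr a₁ =>
              obtain ⟨x, y, hx, hy, hxy⟩ := h5 a₁ (γ b) c a hc (hsymm hA₁)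
              obtain ⟨x', rfl⟩ := hsurj x
              refine ⟨.inl x', hsymm ((hgc x' b).mpr hx), .inr y, ?_⟩
              rw [hop]; exact uop_rl_eq G γ hxy
          · intro B₂ hB₂
            cases B₂ with
            | inr b₂ => exact hB₂.elim
            | inl b₂ =>
              obtain ⟨c₂, hc₂, t, ht⟩ := (h3 (γ b) c a hc).1 (γ b₂) ((hgc b b₂).mp hB₂)
              refine ⟨.inr t, hw.2 _ _ _ _ _ _ hc ht ((hgc b b₂).mp hB₂) hc₂, .inr c₂, ?_⟩
              rw [hop]; exact uop_rl_eq G γ ht
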